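/- Let (Ω, 𝓑, μ) be a probability space and M a dense linear order without endpoints, and work with measurable functions Ω → M modulo null sets. Suppose a, b are measurable functions with μ({ω : a(ω) = b(ω)}) = 0 and both events {a < b} and {b < a} have positive measure. Let c = max(a,b) and d = min(a,b) pointwise. Then c is not a.e. equal to a and not a.e. equal to b, d is not a.e. equal to a and not a.e. equal to b, while {c, d} together with {a, b} satisfy: max(a,b) = c, min(a,b) = d, and a, b are each a.e. equal to a function obtained from c, d by the choosing function ℓ on the events {a < b}, {b < a}. -/
import Mathlib


open MeasureTheory
open scoped Classical

/-- (Core of the failure of exchange in DLO^R.)  Over a probability space, let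
`a, b : Ω → M` take values in a dense linear order without endpoints, with
`μ {a = b} = 0` and both `{a < b}` and `{b < a}` of positive measure.  Let `c = max(a,b)` and
`d = min(a,b)` pointwise.  Then `c` is a.e. equal to neither `a` nor `b`, `d` is a.e. equal to
neither `a` nor `b`, while `a` and `b` are each a.e. equal to the function obtained from
`c, d` by the choosing function `ℓ` on the events `{a < b}`, `{b < a}`. -/
theorem stmt14 {Ω M : Type*} [MeasurableSpace Ω] (μ : Measure Ω) [IsProbabilityMeasure μ]
    [LinearOrder M] [DenselyOrdered M] [NoMinOrder M] [NoMaxOrder M] [Nonempty M]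
    (a b c d : Ω → M)
    (hab : μ {ω | a ω = b ω} = 0)
    (hlt : 0 < μ {ω | a ω < b ω}) (hgt : 0 < μ {ω | b ω < a ω})
    (hc : ∀ ω, c ω = max (a ω) (b ω)) (hd : ∀ ω, d ω = min (a ω) (b ω)) :
    μ {ω | c ω ≠ a ω} ≠ 0 ∧ μ {ω | c ω ≠ b ω} ≠ 0 ∧
    μ {ω | d ω ≠ a ω} ≠ 0 ∧ μ {ω | d ω ≠ b ω} ≠ 0 ∧
    μ {ω | a ω ≠ (if a ω < b ω then d ω else c ω)} = 0 ∧
    μ {ω | b ω ≠ (if a ω < b ω then c ω else d ω)} = 0 := by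
  have key : ∀ (s t : Set Ω), 0 < μ s → s ⊆ t → μ t ≠ 0 := fun s t hs hst =>
    fun h => (hs.trans_le ((measure_mono hst).trans h.le)).false
  refine ⟨key _ _ hlt ?_, key _ _ hgt ?_, key _ _ hgt ?_, key _ _ hlt ?_, ?_, ?_⟩
  · intro ω (h : a ω < b ω); show c ω ≠ a ω
    rw [hc ω, max_eq_right h.le]; exact h.ne'
  · intro ω (h : b ω < a ω); show c ω ≠ b ω
    rw [hc ω, max_eq_left h.le]; exact h.ne'
  · intro ω (h : b ω < a ω); show d ω ≠ a ω
    rw [hd ω, min_eq_right h.le]; exact h.ne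
  · intro ω (h : a ω < b ω); show d ω ≠ b ω
    rw [hd ω, min_eq_left h.le]; exact h.ne
  · convert measure_empty (μ := μ)
    ext ω; simp only [Set.mem_setOf_eq, Set.mem_empty_iff_false, iff_false, not_not]
    split_ifs with h
    · rw [hd ω, min_eq_left h.le]
    · rw [hc ω, max_eq_left (not_lt.mp h)]
  · convert measure_empty (μ := μ)
    ext ω; simp only [Set.mem_setOf_eq, Set.mem_empty_iff_false, iff_false, not_not]
    split_ifs with h
    · rw [hc ω, max_eq_right h.le]
    · rw [hd ω, min_eq_right (not_lt.mp h)]
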